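/- Define the sequence a : N → N recursively as follows: a is the unique sequence satisfying that, starting from a_1 = 2, after the terms a_1, …, a_k have been constructed, the next k terms are a_1, …, a_{k−1}, a_k + 1. Then for every n ≥ 1, a_n equals the 2-adic valuation of 4n, i.e., a_n = ν₂(4n) = ν₂(n) + 2. -/

import Mathlib

lemma pv_add_of_lt {j i : ℕ} (hi : 1 ≤ i) (hij : i < 2 ^ j) :
    padicValNat 2 (2 ^ j + i) = padicValNat 2 i := by
  have hi0 : i ≠ 0 := by omega
  have hn0 : 2 ^ j + i ≠ 0 := by positivity
  set v := padicValNat 2 i with hv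
  have hdv : 2 ^ v ∣ i := pow_padicValNat_dvd
  have hvlt : v < j := by
    have h1 := Nat.le_of_dvd (by omega) hdv
    exact (Nat.pow_lt_pow_iff_right (a := 2) (by norm_num)).mp (by omega)
  have hnd : ¬ 2 ^ (v + 1) ∣ i := by
    intro h
    have := (padicValNat_dvd_iff_le (p := 2) hi0).mp h
    omega
  apply le_antisymm
  · by_contra h
    push_neg at h
    have h1 : 2 ^ (v + 1) ∣ 2 ^ j + i :=
      dvd_trans (pow_dvd_pow 2 (by omega)) pow_padicValNat_dvd
    have h2 : 2 ^ (v + 1) ∣ 2 ^ j := pow_dvd_pow 2 (by omega)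
    exact hnd ((Nat.dvd_add_right h2).mp h1)
  · rw [← padicValNat_dvd_iff_le (p := 2) hn0]
    exact Dvd.dvd.add (pow_dvd_pow 2 hvlt.le) hdv

theorem a_seq_eq_padicValNat (a : ℕ → ℕ)
    (h1 : a 1 = 2)
    (hcopy : ∀ j i : ℕ, 1 ≤ i → i < 2 ^ j → a (2 ^ j + i) = a i)
    (hdouble : ∀ j : ℕ, a (2 ^ (j + 1)) = a (2 ^ j) + 1) :
    ∀ n : ℕ, 1 ≤ n →
      a n = padicValNat 2 (4 * n) ∧ padicValNat 2 (4 * n) = padicValNat 2 n + 2 := by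
  have hpow : ∀ j : ℕ, a (2 ^ j) = j + 2 := by
    intro j
    induction j with
    | zero => simpa using h1
    | succ k ih => rw [hdouble k, ih]
  have key : ∀ n : ℕ, 1 ≤ n → a n = padicValNat 2 n + 2 := by
    intro n
    induction n using Nat.strong_induction_on with
    | _ n ih =>
      intro hn
      rcases eq_or_lt_of_le hn with h | h
      · rw [← h]; simpa using h1
      · -- n ≥ 2
        set j := Nat.log 2 n with hj
        have h2n : 2 ≤ n := h
        have hle : 2 ^ j ≤ n := Nat.pow_log_le_self 2 (by omega)
        have hlt : n < 2 ^ (j + 1) := Nat.lt_pow_succ_log_self (by norm_num) n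
        rcases eq_or_lt_of_le hle with he | hgt
        · rw [← he, hpow j, padicValNat.prime_pow]
        · have hi1 : 1 ≤ n - 2 ^ j := by omega
          have hi2 : n - 2 ^ j < 2 ^ j := by
            have : 2 ^ (j + 1) = 2 ^ j + 2 ^ j := by ring
            omega
          have heq : n = 2 ^ j + (n - 2 ^ j) := by omega
          have hilt : n - 2 ^ j < n := by
            have : 0 < 2 ^ j := Nat.pow_pos (by norm_num)
            omega
          calc a n = a (n - 2 ^ j) := by
                nth_rewrite 1 [heq]; exact hcopy j _ hi1 hi2
            _ = padicValNat 2 (n - 2 ^ j) + 2 := ih _ hilt hi1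
            _ = padicValNat 2 n + 2 := by rw [← pv_add_of_lt hi1 hi2, ← heq]
  intro n hn
  have h4 : padicValNat 2 (4 * n) = padicValNat 2 n + 2 := by
    rw [show (4 : ℕ) = 2 ^ 2 from rfl,
      padicValNat.mul (by norm_num) (by omega), padicValNat.prime_pow, add_comm]
  exact ⟨by rw [h4, key n hn], h4⟩
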